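/- Suppose R = C(M) + E where C(M) = M·λ_k(β)_a⃗ with M ∈ F^(s×k) and E ∈ F^(s×n) has sum-rank weight wt_ΣR(E) = t. Let D ∈ ℕ with k ≤ D ≤ n − t. Then the F-linear space of all tuples (Q_0, Q_1, …, Q_s) with Q_0 ∈ F^D and Q_l ∈ F^(D−k+1) for 1 ≤ l ≤ s that satisfy the interpolation conditions for R has dimension over F at least s·(D+1) − s·k − t. -/

import Mathlib

namespace Stmt11

/-- `genNorm σ a i = σ^(i-1)(a) ⋯ σ(a) · a`, the generalized power function `N_i(a)`. -/
def genNorm {F : Type} [Field F] (σ : F ≃+* F) (a : F) : ℕ → F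
  | 0 => 1
  | i + 1 => (⇑σ)^[i] a * genNorm σ a i

/-- Generalized operator `D_a^i(b) = σ^i(b) · N_i(a)` for `i ∈ ℕ`. -/
def opev {F : Type} [Field F] (σ : F ≃+* F) (a b : F) (i : ℕ) : F :=
  (⇑σ)^[i] b * genNorm σ a i

/-- `b` is σ-conjugate to `a`, i.e. `b = σ(c)·a·c⁻¹` for some nonzero `c`. -/
def SConj {F : Type} [Field F] (σ : F ≃+* F) (a b : F) : Prop :=
  ∃ c : F, c ≠ 0 ∧ b = σ c * a * c⁻¹

/-- σ-generalized Moore matrix `λ_d(x)_a⃗` w.r.t. the length partition `nn`: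
its row `r` applies `D_{a_i}^r` entrywise to the `i`-th block of `x`. -/
def moore {F : Type} [Field F] (σ : F ≃+* F) {ℓ : ℕ} (nn : Fin ℓ → ℕ) (aa : Fin ℓ → F)
    (d : ℕ) (x : (Σ i : Fin ℓ, Fin (nn i)) → F) :
    Matrix (Fin d) (Σ i : Fin ℓ, Fin (nn i)) F :=
  Matrix.of fun r p => opev σ (aa p.1) (x p) (r : ℕ)

/-- `λ_d(X)_a⃗` for a matrix `X`: the stack of `λ_d(x_j)_a⃗` over the rows of `X`. -/
def mooreMat {F : Type} [Field F] (σ : F ≃+* F) {ℓ : ℕ} (nn : Fin ℓ → ℕ) (aa : Fin ℓ → F)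
    {s : ℕ} (d : ℕ) (X : Matrix (Fin s) (Σ i : Fin ℓ, Fin (nn i)) F) :
    Matrix (Fin s × Fin d) (Σ i : Fin ℓ, Fin (nn i)) F :=
  Matrix.of fun r p => opev σ (aa p.1) (X r.1 p) (r.2 : ℕ)

/-- `rk_q` of a vector: the `K`-dimension of the `K`-span of its entries. -/
noncomputable def rkq (K : Type) [Field K] {F : Type} [Field F] [Algebra K F] {ι : Type}
    (v : ι → F) : ℕ :=
  Module.finrank K (Submodule.span K (Set.range v))

/-- `rk_q` of a matrix: the `K`-dimension of the `K`-span of its columns. -/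
noncomputable def rkqMat (K : Type) [Field K] {F : Type} [Field F] [Algebra K F]
    {s : ℕ} {ι : Type} (X : Matrix (Fin s) ι F) : ℕ :=
  Module.finrank K (Submodule.span K (Set.range fun j : ι => fun r : Fin s => X r j))

/-- Sum-rank weight of a blockwise vector. -/
noncomputable def wtV (K : Type) [Field K] {F : Type} [Field F] [Algebra K F] {ℓ : ℕ}
    (nn : Fin ℓ → ℕ) (x : (Σ i : Fin ℓ, Fin (nn i)) → F) : ℕ :=
  ∑ i, rkq K fun μ : Fin (nn i) => x ⟨i, μ⟩

/-- Sum-rank weight of a blockwise matrix. -/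
noncomputable def wtM (K : Type) [Field K] {F : Type} [Field F] [Algebra K F] {s ℓ : ℕ}
    (nn : Fin ℓ → ℕ) (X : Matrix (Fin s) (Σ i : Fin ℓ, Fin (nn i)) F) : ℕ :=
  ∑ i, rkqMat K (Matrix.of fun (r : Fin s) (μ : Fin (nn i)) => X r ⟨i, μ⟩)

/-- Codeword `C(M) = M · λ_k(β)_a⃗` of the `s`-interleaved linearized Reed–Solomon code. -/
def codeword {F : Type} [Field F] (σ : F ≃+* F) {ℓ : ℕ} (nn : Fin ℓ → ℕ) (aa : Fin ℓ → F)
    (β : (Σ i : Fin ℓ, Fin (nn i)) → F) {s : ℕ} (k : ℕ) (M : Matrix (Fin s) (Fin k) F) :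
    Matrix (Fin s) (Σ i : Fin ℓ, Fin (nn i)) F :=
  M * moore σ nn aa k β

/-- Interpolation matrix: row index `inl u` corresponds to the coefficient `Q_{0,u}`
(evaluated on `β`), row index `inr (l, u)` to the coefficient `Q_{l,u}` (evaluated on
row `l` of `R`). A tuple `(Q_0, Q_1, …, Q_s)` satisfies the interpolation conditions
iff its coefficient vector is in the kernel of `(intMat …)ᵀ`. -/
def intMat {F : Type} [Field F] (σ : F ≃+* F) {ℓ : ℕ} (nn : Fin ℓ → ℕ) (aa : Fin ℓ → F)
    (β : (Σ i : Fin ℓ, Fin (nn i)) → F) {s : ℕ}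
    (R : Matrix (Fin s) (Σ i : Fin ℓ, Fin (nn i)) F) (D k : ℕ) :
    Matrix (Fin D ⊕ Fin s × Fin (D - k + 1)) (Σ i : Fin ℓ, Fin (nn i)) F :=
  Matrix.of fun c p =>
    match c with
    | Sum.inl u => opev σ (aa p.1) (β p) (u : ℕ)
    | Sum.inr lu => opev σ (aa p.1) (R lu.1 p) (lu.2 : ℕ)


section Aux

variable {F : Type} [Field F] (σ : F ≃+* F)

lemma iter_map_mul (u : ℕ) (x y : F) : (⇑σ)^[u] (x * y) = (⇑σ)^[u] x * (⇑σ)^[u] y := by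
  induction u generalizing x y with
  | zero => simp
  | succ n ih => simp [Function.iterate_succ_apply, map_mul, ih]

lemma iter_map_add (u : ℕ) (x y : F) : (⇑σ)^[u] (x + y) = (⇑σ)^[u] x + (⇑σ)^[u] y := by
  induction u generalizing x y with
  | zero => simp
  | succ n ih => simp [Function.iterate_succ_apply, map_add, ih]

lemma genNorm_add (a : F) (u j : ℕ) :
    genNorm σ a (u + j) = (⇑σ)^[u] (genNorm σ a j) * genNorm σ a u := by
  induction j with
  | zero => simp [genNorm]
  | succ j ih =>
    have h : u + (j + 1) = (u + j) + 1 := by omega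
    rw [h, genNorm, genNorm, ih, iter_map_mul, ← Function.iterate_add_apply]
    ring

lemma opev_opev (a b : F) (u j : ℕ) :
    opev σ a (opev σ a b j) u = opev σ a b (u + j) := by
  simp only [opev, iter_map_mul, genNorm_add, ← Function.iterate_add_apply]
  ring

lemma opev_add (a : F) (u : ℕ) (x y : F) :
    opev σ a (x + y) u = opev σ a x u + opev σ a y u := by
  simp [opev, iter_map_add, add_mul]

lemma opev_mul_left (a : F) (u : ℕ) (c b : F) :
    opev σ a (c * b) u = (⇑σ)^[u] c * opev σ a b u := by
  simp only [opev, iter_map_mul]; ring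

lemma opev_sum {ι : Type*} (a : F) (u : ℕ) (S : Finset ι) (g : ι → F) :
    opev σ a (∑ j ∈ S, g j) u = ∑ j ∈ S, opev σ a (g j) u := by
  classical
  induction S using Finset.induction with
  | empty => simp [opev]
  | insert _ _ h ih => simp [Finset.sum_insert h, opev_add, ih]

end Aux

set_option maxHeartbeats 2000000 in
/-- Dimension of the interpolation solution space.
If `R = C(M) + E` with `wt_ΣR(E) = t` and `k ≤ D ≤ n − t`, then the `F`-linear space
of tuples `(Q_0, Q_1, …, Q_s)` with `Q_0 ∈ F^D`, `Q_l ∈ F^{D−k+1}` satisfying the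
interpolation conditions for `R` has `F`-dimension at least `s(D+1) − sk − t`. -/
theorem interpolation_solution_dim_ge
    {K F : Type} [Field K] [Field F] [Algebra K F] [Fintype K] [Fintype F]
    (σ : F ≃+* F)
    (hfix : ∀ x : F, σ x = x ↔ x ∈ Set.range (algebraMap K F))
    {ℓ : ℕ} (hℓ : 1 ≤ ℓ) (nn : Fin ℓ → ℕ) (aa : Fin ℓ → F)
    (ha0 : ∀ i, aa i ≠ 0)
    (haconj : ∀ i j : Fin ℓ, i ≠ j → ¬ SConj σ (aa i) (aa j))
    (β : (Σ i : Fin ℓ, Fin (nn i)) → F)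
    (hβ : ∀ i, LinearIndependent K fun μ : Fin (nn i) => β ⟨i, μ⟩)
    {s : ℕ} (hs : 1 ≤ s) {k n t : ℕ} (hn : n = ∑ i, nn i)
    (hk : 1 ≤ k) (hkn : k ≤ n)
    (M : Matrix (Fin s) (Fin k) F)
    (E R : Matrix (Fin s) (Σ i : Fin ℓ, Fin (nn i)) F)
    (hR : R = codeword σ nn aa β k M + E)
    (ht : wtM K nn E = t)
    (D : ℕ) (hkD : k ≤ D) (hDn : D ≤ n - t) :
    (s : ℤ) * (D + 1) - s * k - t ≤
      (Module.finrank F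
        (LinearMap.ker (Matrix.mulVecLin (intMat σ nn aa β R D k).transpose)) : ℤ) := by
  classical
  have hfixiter : ∀ (u : ℕ) (c : K), (⇑σ)^[u] (algebraMap K F c) = algebraMap K F c := by
    intro u c
    induction u with
    | zero => rfl
    | succ n ih => rw [Function.iterate_succ_apply', ih, (hfix _).2 ⟨c, rfl⟩]
  let Cm : Matrix (Fin D ⊕ Fin s × Fin (D - k + 1)) (Σ i : Fin ℓ, Fin (nn i)) F :=
    Matrix.of fun c p => match c with
      | Sum.inl u => opev σ (aa p.1) (β p) (u : ℕ)
      | Sum.inr lu => opev σ (aa p.1) (codeword σ nn aa β k M lu.1 p) (lu.2 : ℕ)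
  let Bm : Matrix (Fin D ⊕ Fin s × Fin (D - k + 1)) (Σ i : Fin ℓ, Fin (nn i)) F :=
    Matrix.of fun c p => match c with
      | Sum.inl _ => 0
      | Sum.inr lu => opev σ (aa p.1) (E lu.1 p) (lu.2 : ℕ)
  have hAB : intMat σ nn aa β R D k = Cm + Bm := by
    ext c p
    cases c with
    | inl u => simp [intMat, Cm, Bm]
    | inr lu =>
      simp [intMat, Cm, Bm, hR, Matrix.add_apply, opev_add]
  -- rank of the codeword part
  have hCrank : Cm.rank ≤ D := by
    rw [← Matrix.rank_transpose, Matrix.rank_eq_finrank_span_cols, Matrix.col_transpose]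
    have hle : Submodule.span F (Set.range Cm) ≤
        Submodule.span F (Set.range fun u : Fin D => fun p : (Σ i : Fin ℓ, Fin (nn i)) =>
          opev σ (aa p.1) (β p) (u : ℕ)) := by
      rw [Submodule.span_le]
      rintro _ ⟨c, rfl⟩
      cases c with
      | inl u => exact Submodule.subset_span ⟨u, rfl⟩
      | inr lu =>
        obtain ⟨l, u⟩ := lu
        have hrow : Cm (Sum.inr (l, u)) = ∑ j : Fin k,
            (⇑σ)^[(u : ℕ)] (M l j) • (fun p : (Σ i : Fin ℓ, Fin (nn i)) =>
              opev σ (aa p.1) (β p)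
                (((⟨(u : ℕ) + (j : ℕ), by omega⟩ : Fin D) : ℕ))) := by
          funext p
          show opev σ (aa p.1) (codeword σ nn aa β k M l p) (u : ℕ) = _
          simp only [codeword, Matrix.mul_apply, moore, Matrix.of_apply]
          rw [opev_sum]
          simp only [Finset.sum_apply, Pi.smul_apply, smul_eq_mul]
          refine Finset.sum_congr rfl fun j _ => ?_
          rw [opev_mul_left, opev_opev]
        rw [hrow]
        exact Submodule.sum_mem _ fun j _ => Submodule.smul_mem _ _
          (Submodule.subset_span ⟨_, rfl⟩)
    exact le_trans (Submodule.finrank_mono hle)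
      (le_trans (finrank_range_le_card _) (by simp))
  -- rank of the error part
  let V : Fin ℓ → Submodule K (Fin s → F) := fun i =>
    Submodule.span K (Set.range fun μ : Fin (nn i) => fun r : Fin s => E r ⟨i, μ⟩)
  let bb : (i : Fin ℓ) → Module.Basis (Fin (Module.finrank K (V i))) K (V i) := fun i =>
    Module.finBasis K (V i)
  have hsumt : ∑ i, Module.finrank K (V i) = t := by
    rw [← ht]
    rfl
  let G : (Σ i : Fin ℓ, Fin (Module.finrank K (V i))) →
      (Fin D ⊕ Fin s × Fin (D - k + 1)) → F :=
    fun iw c => match c with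
      | Sum.inl _ => 0
      | Sum.inr lu => opev σ (aa iw.1) ((↑(bb iw.1 iw.2) : Fin s → F) lu.1) (lu.2 : ℕ)
  have hBrank : Bm.rank ≤ t := by
    rw [Matrix.rank_eq_finrank_span_cols]
    have hle : Submodule.span F (Set.range Bm.transpose) ≤ Submodule.span F (Set.range G) := by
      rw [Submodule.span_le]
      rintro _ ⟨p, rfl⟩
      obtain ⟨i, μ⟩ := p
      have he : (fun r : Fin s => E r ⟨i, μ⟩) ∈ V i := Submodule.subset_span ⟨μ, rfl⟩
      have hrepr : ∀ l : Fin s, E l ⟨i, μ⟩ =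
          ∑ w, algebraMap K F ((bb i).repr ⟨_, he⟩ w) * (↑(bb i w) : Fin s → F) l := by
        intro l
        have h1 := (bb i).sum_repr ⟨_, he⟩
        have h2 := congrArg (fun z : V i => (z : Fin s → F) l) h1
        simp only [Submodule.coe_sum, SetLike.val_smul, Finset.sum_apply,
          Pi.smul_apply, Algebra.smul_def] at h2
        exact h2.symm
      have hcol : Bm.transpose ⟨i, μ⟩ = ∑ w, algebraMap K F ((bb i).repr ⟨_, he⟩ w) • G ⟨i, w⟩ := by
        funext c
        cases c with
        | inl u => simp [Bm, G, Matrix.transpose_apply]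
        | inr lu =>
          show opev σ (aa i) (E lu.1 ⟨i, μ⟩) (lu.2 : ℕ) = _
          rw [hrepr lu.1, opev_sum]
          simp only [Finset.sum_apply, Pi.smul_apply, smul_eq_mul]
          refine Finset.sum_congr rfl fun w _ => ?_
          rw [opev_mul_left, hfixiter]
      rw [hcol]
      exact Submodule.sum_mem _ fun w _ => Submodule.smul_mem _ _
        (Submodule.subset_span ⟨⟨i, w⟩, rfl⟩)
    refine le_trans (Submodule.finrank_mono hle) (le_trans (finrank_range_le_card _) ?_)
    simp [Fintype.card_sigma, hsumt]
  -- total rank bound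
  have hrank : (intMat σ nn aa β R D k).rank ≤ D + t := by
    have hle : LinearMap.range (intMat σ nn aa β R D k).mulVecLin ≤
        LinearMap.range Cm.mulVecLin ⊔ LinearMap.range Bm.mulVecLin := by
      rw [hAB, Matrix.mulVecLin_add]
      rintro x ⟨v, rfl⟩
      exact Submodule.mem_sup.2 ⟨_, ⟨v, rfl⟩, _, ⟨v, rfl⟩, rfl⟩
    calc (intMat σ nn aa β R D k).rank
        ≤ Module.finrank F
            ↥(LinearMap.range Cm.mulVecLin ⊔ LinearMap.range Bm.mulVecLin) :=
          Submodule.finrank_mono hle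
      _ ≤ Cm.rank + Bm.rank :=
          Submodule.finrank_add_le_finrank_add_finrank _ _
      _ ≤ D + t := add_le_add hCrank hBrank
  -- rank-nullity
  have hrn := LinearMap.finrank_range_add_finrank_ker
    (Matrix.mulVecLin (intMat σ nn aa β R D k).transpose)
  rw [Module.finrank_fintype_fun_eq_card] at hrn
  have hcard : Fintype.card (Fin D ⊕ Fin s × Fin (D - k + 1)) = D + s * (D - k + 1) := by
    simp
  rw [hcard] at hrn
  have hrt : Module.finrank F
      (LinearMap.range (Matrix.mulVecLin (intMat σ nn aa β R D k).transpose)) ≤ D + t := by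
    calc Module.finrank F (LinearMap.range (Matrix.mulVecLin (intMat σ nn aa β R D k).transpose))
        = (intMat σ nn aa β R D k).transpose.rank := rfl
      _ = (intMat σ nn aa β R D k).rank := Matrix.rank_transpose _
      _ ≤ D + t := hrank
  have hDd : D - k + 1 = D - k + 1 := rfl
  have hZ := congrArg (Nat.cast : ℕ → ℤ) hrn
  have hsub : ((D - k + 1 : ℕ) : ℤ) = (D : ℤ) - k + 1 := by
    have : (D - k : ℕ) = D - k := rfl
    omega
  push_cast [hsub] at hZ
  have hrtZ : (Module.finrank F
      (LinearMap.range (Matrix.mulVecLin (intMat σ nn aa β R D k).transpose)) : ℤ) ≤ D + t := by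
    exact_mod_cast hrt
  have htn : (t : ℤ) ≥ 0 := by positivity
  nlinarith [hZ, hrtZ]


end Stmt11
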